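/- arXiv:1708.00740 — 2 statements merged into one kernel-verified Lean document; each statement's English description precedes it below -/
import Mathlib

section
/- For any bipartite density matrix ρ_AB, every quantumness-of-correlations measure Q_E defined through the activation protocol is lower bounded by the corresponding entanglement measure: Q_E(ρ_AB) ≥ E_Q(ρ_AB), where Q_E(ρ_S) = min over local unitaries U_S of E_Q(U_{S:M}(ρ_S ⊗ |0⟩⟨0|_M)U_{S:M}†) with the entanglement E_Q evaluated across the system : apparatus cut. -/
open scoped Matrix Kronecker ComplexOrder Classical
open Filter

noncomputable section

namespace QI

/-! ### Basic objects: states, entropy, partial traces -/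

/-- The outer product `|v⟩⟨v|` of a vector with itself. -/
def proj {n : Type*} (v : n → ℂ) : Matrix n n ℂ :=
  Matrix.of fun i j => v i * star (v j)

/-- The tensor product of two vectors. -/
def tensorVec {A B : Type*} (u : A → ℂ) (v : B → ℂ) : A × B → ℂ :=
  fun p => u p.1 * v p.2

/-- A unit (normalized) vector. -/
def UnitVec {n : Type*} [Fintype n] (v : n → ℂ) : Prop :=
  ∑ i, star (v i) * v i = 1

/-- A density matrix: positive semidefinite (hence Hermitian) with unit trace. -/
def IsDensityMatrix {n : Type*} [Fintype n] (ρ : Matrix n n ℂ) : Prop :=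
  ρ.PosSemidef ∧ ρ.trace = 1

/-- A pure state: a rank-one projector onto a unit vector. -/
def IsPure {n : Type*} [Fintype n] (ρ : Matrix n n ℂ) : Prop :=
  ∃ v : n → ℂ, UnitVec v ∧ ρ = proj v

/-- The von Neumann entropy (base 2), `S(ρ) = -Tr[ρ log₂ ρ] = -∑ λᵢ log₂ λᵢ`. -/
def entropy {n : Type*} [Fintype n] [DecidableEq n] (ρ : Matrix n n ℂ) : ℝ :=
  if h : ρ.IsHermitian then -∑ i, h.eigenvalues i * Real.logb 2 (h.eigenvalues i) else 0

/-- The Shannon entropy of a probability distribution. -/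
def shannonEntropy {X : Type*} [Fintype X] (p : X → ℝ) : ℝ :=
  -∑ x, p x * Real.logb 2 (p x)

/-- Partial trace over the second tensor factor. -/
def trB {A B : Type*} [Fintype A] [Fintype B] (ρ : Matrix (A × B) (A × B) ℂ) :
    Matrix A A ℂ :=
  Matrix.of fun a a' => ∑ b, ρ (a, b) (a', b)

/-- Partial trace over the first tensor factor. -/
def trA {A B : Type*} [Fintype A] [Fintype B] (ρ : Matrix (A × B) (A × B) ℂ) :
    Matrix B B ℂ :=
  Matrix.of fun b b' => ∑ a, ρ (a, b) (a, b')

/-- For a tripartite state on `A × B × E`, the partial trace over the middle factor `B`. -/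
def trB3 {A B E : Type*} [Fintype A] [Fintype B] [Fintype E]
    (ρ : Matrix (A × B × E) (A × B × E) ℂ) : Matrix (A × E) (A × E) ℂ :=
  Matrix.of fun p q => ∑ b, ρ (p.1, b, p.2) (q.1, b, q.2)

/-- For a tripartite state on `A × B × E`, the partial trace over the last factor `E`. -/
def trE3 {A B E : Type*} [Fintype A] [Fintype B] [Fintype E]
    (ρ : Matrix (A × B × E) (A × B × E) ℂ) : Matrix (A × B) (A × B) ℂ :=
  Matrix.of fun p q => ∑ e, ρ (p.1, p.2, e) (q.1, q.2, e)

/-- Quantum mutual information `I(A:B) = S(ρ_A) + S(ρ_B) - S(ρ_AB)`. -/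
def mutualInfo {A B : Type*} [Fintype A] [DecidableEq A] [Fintype B] [DecidableEq B]
    (ρ : Matrix (A × B) (A × B) ℂ) : ℝ :=
  entropy (trB ρ) + entropy (trA ρ) - entropy ρ

/-- Quantum conditional entropy `S(A|B) = S(ρ_AB) - S(ρ_B)`. -/
def condEnt {A B : Type*} [Fintype A] [DecidableEq A] [Fintype B] [DecidableEq B]
    (ρ : Matrix (A × B) (A × B) ℂ) : ℝ :=
  entropy ρ - entropy (trA ρ)

/-- Coherent information `I(A⟩B) = -S(A|B) = S(ρ_B) - S(ρ_AB)`. -/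
def cohInfo {A B : Type*} [Fintype A] [DecidableEq A] [Fintype B] [DecidableEq B]
    (ρ : Matrix (A × B) (A × B) ℂ) : ℝ :=
  entropy (trA ρ) - entropy ρ

/-! ### Measurements, classical correlations, discord -/

/-- Post-measurement state `∑ₓ Tr_B[(I ⊗ Mₓ)ρ] ⊗ |x⟩⟨x|` of a local POVM `{Mₓ}` on `B`. -/
def postMeas {A B : Type*} [Fintype A] [DecidableEq A] [Fintype B] [DecidableEq B] {m : ℕ}
    (M : Fin m → Matrix B B ℂ) (ρ : Matrix (A × B) (A × B) ℂ) :
    Matrix (A × Fin m) (A × Fin m) ℂ :=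
  Matrix.of fun p q =>
    if p.2 = q.2 then trB (((1 : Matrix A A ℂ) ⊗ₖ M p.2) * ρ) p.1 q.1 else 0

/-- Classical correlations `J(A:B) = sup` over local POVM measurements on `B` of the
mutual information of the post-measurement state. -/
def classicalCorr {A B : Type*} [Fintype A] [DecidableEq A] [Fintype B] [DecidableEq B]
    (ρ : Matrix (A × B) (A × B) ℂ) : ℝ :=
  sSup { r | ∃ (m : ℕ) (M : Fin m → Matrix B B ℂ),
    (∀ x, (M x).PosSemidef) ∧ (∑ x, M x = 1) ∧ r = mutualInfo (postMeas M ρ) }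

/-- Quantum discord `D(A:B) = I(A:B) - J(A:B)` (measurement on the second subsystem). -/
def discord {A B : Type*} [Fintype A] [DecidableEq A] [Fintype B] [DecidableEq B]
    (ρ : Matrix (A × B) (A × B) ℂ) : ℝ :=
  mutualInfo ρ - classicalCorr ρ

/-! ### Entanglement measures -/

/-- Entanglement of formation: the minimum average entanglement entropy over pure-state
ensembles realizing `ρ`. -/
def eof {A B : Type*} [Fintype A] [DecidableEq A] [Fintype B] [DecidableEq B]
    (ρ : Matrix (A × B) (A × B) ℂ) : ℝ :=
  sInf { r | ∃ (m : ℕ) (p : Fin m → ℝ) (ψ : Fin m → (A × B → ℂ)),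
    (∀ i, 0 ≤ p i) ∧ (∑ i, p i = 1) ∧ (∀ i, UnitVec (ψ i)) ∧
    ρ = ∑ i, (p i : ℂ) • proj (ψ i) ∧
    r = ∑ i, p i * entropy (trB (proj (ψ i))) }

/-- Separable states: convex combinations of product states. -/
def IsSeparable {A B : Type*} [Fintype A] [Fintype B]
    (ρ : Matrix (A × B) (A × B) ℂ) : Prop :=
  ∃ (m : ℕ) (p : Fin m → ℝ) (σA : Fin m → Matrix A A ℂ) (σB : Fin m → Matrix B B ℂ),
    (∀ i, 0 ≤ p i) ∧ (∑ i, p i = 1) ∧ (∀ i, IsDensityMatrix (σA i)) ∧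
    (∀ i, IsDensityMatrix (σB i)) ∧ ρ = ∑ i, (p i : ℂ) • (σA i ⊗ₖ σB i)

/-- The `k`-fold tensor power of a bipartite state, with tensor factors regrouped as
`(A^k) × (B^k)`. -/
def pow {A B : Type*} [Fintype A] [Fintype B] (ρ : Matrix (A × B) (A × B) ℂ) (k : ℕ) :
    Matrix ((Fin k → A) × (Fin k → B)) ((Fin k → A) × (Fin k → B)) ℂ :=
  Matrix.of fun p q => ∏ i, ρ (p.1 i, p.2 i) (q.1 i, q.2 i)

/-- Regularization `lim_{k → ∞} f k / k`. -/
def regularize (f : ℕ → ℝ) : ℝ :=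
  limUnder atTop fun k : ℕ => f k / k

/-- Entanglement cost: the regularized entanglement of formation. -/
def entCost {A B : Type*} [Fintype A] [DecidableEq A] [Fintype B] [DecidableEq B]
    (ρ : Matrix (A × B) (A × B) ℂ) : ℝ :=
  regularize fun k => eof (pow ρ k)

/-- Regularized quantum discord. -/
def regDiscord {A B : Type*} [Fintype A] [DecidableEq A] [Fintype B] [DecidableEq B]
    (ρ : Matrix (A × B) (A × B) ℂ) : ℝ :=
  regularize fun k => discord (pow ρ k)

/-- An LOCC (modelled as separable-Kraus) quantum channel between bipartite systems:
all Kraus operators are of local product form. -/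
def IsLOCCChannel {A B : Type*} [Fintype A] [DecidableEq A] [Fintype B] [DecidableEq B]
    {a b : ℕ} (Λ : Matrix (A × B) (A × B) ℂ → Matrix (Fin a × Fin b) (Fin a × Fin b) ℂ) :
    Prop :=
  ∃ (m : ℕ) (L : Fin m → Matrix (Fin a) A ℂ) (R : Fin m → Matrix (Fin b) B ℂ),
    (∑ k, (L k ⊗ₖ R k)ᴴ * (L k ⊗ₖ R k) = 1) ∧
    ∀ ρ, Λ ρ = ∑ k, (L k ⊗ₖ R k) * ρ * (L k ⊗ₖ R k)ᴴ

/-- Distillable entanglement: the regularized coherent information optimized over LOCC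
operations on the copies. -/
def distEnt {A B : Type*} [Fintype A] [DecidableEq A] [Fintype B] [DecidableEq B]
    (ρ : Matrix (A × B) (A × B) ℂ) : ℝ :=
  limUnder atTop fun k : ℕ =>
    (sSup { r | ∃ (a b : ℕ)
        (Λ : Matrix ((Fin k → A) × (Fin k → B)) ((Fin k → A) × (Fin k → B)) ℂ →
          Matrix (Fin a × Fin b) (Fin a × Fin b) ℂ),
        IsLOCCChannel Λ ∧ r = cohInfo (Λ (pow ρ k)) }) / k

/-! ### Orthonormal families, dephasings, relative entropy -/

/-- A family of vectors is orthonormal. -/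
def OrthonormalFam {ι n : Type*} [Fintype n] [DecidableEq ι] (v : ι → n → ℂ) : Prop :=
  ∀ i j, (∑ x, star (v i x) * v j x) = if i = j then (1 : ℂ) else 0

/-- The Hermitian functional calculus of `log₂` (with the convention `log₂ 0 = 0`),
used to define `Tr[ρ log₂ σ]`. -/
def hermLog {n : Type*} [Fintype n] [DecidableEq n] (M : Matrix n n ℂ) : Matrix n n ℂ :=
  if h : M.IsHermitian then
    (h.eigenvectorUnitary : Matrix n n ℂ) *
      Matrix.diagonal (fun i => (Real.logb 2 (h.eigenvalues i) : ℂ)) *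
      (star (h.eigenvectorUnitary : Matrix n n ℂ))
  else 0

/-- Quantum relative entropy `S(ρ‖σ) = Tr[ρ log₂ ρ - ρ log₂ σ]`. -/
def relEnt {n : Type*} [Fintype n] [DecidableEq n] (ρ σ : Matrix n n ℂ) : ℝ :=
  ((ρ * hermLog ρ - ρ * hermLog σ).trace).re

/-- Local dephasing of the second subsystem in the orthonormal basis `e`. -/
def dephB {A B : Type*} [Fintype A] [DecidableEq A] [Fintype B] [DecidableEq B]
    (e : B → B → ℂ) (ρ : Matrix (A × B) (A × B) ℂ) : Matrix (A × B) (A × B) ℂ :=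
  ∑ k, ((1 : Matrix A A ℂ) ⊗ₖ proj (e k)) * ρ * ((1 : Matrix A A ℂ) ⊗ₖ proj (e k))

/-- Local dephasing of both subsystems in the orthonormal bases `a` and `b`. -/
def dephAB {A B : Type*} [Fintype A] [DecidableEq A] [Fintype B] [DecidableEq B]
    (a : A → A → ℂ) (b : B → B → ℂ) (ρ : Matrix (A × B) (A × B) ℂ) :
    Matrix (A × B) (A × B) ℂ :=
  ∑ k, ∑ l, (proj (a k) ⊗ₖ proj (b l)) * ρ * (proj (a k) ⊗ₖ proj (b l))

/-- One-way work deficit: minimum entropy production over complete local dephasings of `B`. -/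
def oneWayDeficit {A B : Type*} [Fintype A] [DecidableEq A] [Fintype B] [DecidableEq B]
    (ρ : Matrix (A × B) (A × B) ℂ) : ℝ :=
  sInf { r | ∃ e : B → B → ℂ, OrthonormalFam e ∧ r = entropy (dephB e ρ) - entropy ρ }

/-- Zero-way work deficit: minimum entropy production over complete local dephasings of
both subsystems. -/
def zeroWayDeficit {A B : Type*} [Fintype A] [DecidableEq A] [Fintype B] [DecidableEq B]
    (ρ : Matrix (A × B) (A × B) ℂ) : ℝ :=
  sInf { r | ∃ (a : A → A → ℂ) (b : B → B → ℂ), OrthonormalFam a ∧ OrthonormalFam b ∧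
    r = entropy (dephAB a b ρ) - entropy ρ }

/-- Quantum-classical states `∑ₖ pₖ ρₖ ⊗ |eₖ⟩⟨eₖ|`. -/
def IsQCState {A B : Type*} [Fintype A] [Fintype B] [DecidableEq B]
    (σ : Matrix (A × B) (A × B) ℂ) : Prop :=
  ∃ (e : B → B → ℂ) (p : B → ℝ) (ρk : B → Matrix A A ℂ),
    OrthonormalFam e ∧ (∀ k, 0 ≤ p k) ∧ (∑ k, p k = 1) ∧
    (∀ k, IsDensityMatrix (ρk k)) ∧ σ = ∑ k, (p k : ℂ) • (ρk k ⊗ₖ proj (e k))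

/-- Classical-classical (strictly classically correlated) states
`∑ₖⱼ p_{kj} |aₖ⟩⟨aₖ| ⊗ |bⱼ⟩⟨bⱼ|`. -/
def IsCCState {A B : Type*} [Fintype A] [DecidableEq A] [Fintype B] [DecidableEq B]
    (ρ : Matrix (A × B) (A × B) ℂ) : Prop :=
  ∃ (a : A → A → ℂ) (b : B → B → ℂ) (p : A → B → ℝ),
    OrthonormalFam a ∧ OrthonormalFam b ∧ (∀ k j, 0 ≤ p k j) ∧
    (∑ k, ∑ j, p k j) = 1 ∧
    ρ = ∑ k, ∑ j, (p k j : ℂ) • proj (tensorVec (a k) (b j))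

/-- Relative entropy of quantumness w.r.t. quantum-classical states. -/
def relEntQuantumnessQC {A B : Type*} [Fintype A] [DecidableEq A] [Fintype B] [DecidableEq B]
    (ρ : Matrix (A × B) (A × B) ℂ) : ℝ :=
  sInf { r | ∃ σ : Matrix (A × B) (A × B) ℂ, IsQCState σ ∧ r = relEnt ρ σ }

/-- Relative entropy of quantumness w.r.t. classical-classical states. -/
def relEntQuantumnessCC {A B : Type*} [Fintype A] [DecidableEq A] [Fintype B] [DecidableEq B]
    (ρ : Matrix (A × B) (A × B) ℂ) : ℝ :=
  sInf { r | ∃ σ : Matrix (A × B) (A × B) ℂ, IsCCState σ ∧ r = relEnt ρ σ }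

/-- Relative entropy of entanglement: minimal relative entropy to a separable state. -/
def relEntEntanglement {A B : Type*} [Fintype A] [DecidableEq A] [Fintype B] [DecidableEq B]
    (ρ : Matrix (A × B) (A × B) ℂ) : ℝ :=
  sInf { r | ∃ σ : Matrix (A × B) (A × B) ℂ, IsSeparable σ ∧ r = relEnt ρ σ }

/-! ### The activation protocol -/

/-- The reference vector `|0⟩`. -/
def ket0 (a : ℕ) [NeZero a] : Fin a → ℂ := fun i => if i = 0 then 1 else 0

/-- The generalized CNOT (copy) gate `|k⟩|m⟩ ↦ |k⟩|m + k⟩` on `Fin a × Fin a`. -/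
def cnot (a : ℕ) : Matrix (Fin a × Fin a) (Fin a × Fin a) ℂ :=
  Matrix.of fun p q => if p.1 = q.1 ∧ p.2 = q.2 + q.1 then 1 else 0

/-- The tensor product `U_{A:M_A} ⊗ U_{B:M_B}` of two two-party operators, with the
global tensor factors grouped as `(A × B) × (M_A × M_B)` (system : apparatus). -/
def pairKron {α α' β β' : Type*} (UA : Matrix (α × α') (α × α') ℂ)
    (UB : Matrix (β × β') (β × β') ℂ) :
    Matrix ((α × β) × (α' × β')) ((α × β) × (α' × β')) ℂ :=
  Matrix.of fun p q => UA (p.1.1, p.2.1) (q.1.1, q.2.1) * UB (p.1.2, p.2.2) (q.1.2, q.2.2)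

/-- A measurement-interaction unitary on system ⊗ apparatus, acting as
`|k⟩|0⟩ ↦ |k⟩|k⟩` on some orthonormal basis `e` (the copies `f k` being orthonormal). -/
def IsCopyUnitary {n : Type*} [Fintype n] [DecidableEq n]
    (U : Matrix (n × n) (n × n) ℂ) (ref : n → ℂ) : Prop :=
  U ∈ Matrix.unitaryGroup (n × n) ℂ ∧
  ∃ e f : n → n → ℂ, OrthonormalFam e ∧ OrthonormalFam f ∧
    ∀ k, U.mulVec (tensorVec (e k) ref) = tensorVec (e k) (f k)

/-- The interaction unitary of the activation protocol,
`U_{S:M} = C_{S:M} (U_S ⊗ 1_M)` with `U_S = U_A ⊗ U_B`. -/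
def activationUnitary {a b : ℕ} (UA : Matrix (Fin a) (Fin a) ℂ)
    (UB : Matrix (Fin b) (Fin b) ℂ) :
    Matrix ((Fin a × Fin b) × (Fin a × Fin b)) ((Fin a × Fin b) × (Fin a × Fin b)) ℂ :=
  pairKron (cnot a) (cnot b) *
    ((UA ⊗ₖ UB) ⊗ₖ (1 : Matrix (Fin a × Fin b) (Fin a × Fin b) ℂ))

/-- The post-interaction system : apparatus state
`ρ̃_{S:M} = U_{S:M} (ρ_S ⊗ |0⟩⟨0|_M) U_{S:M}†` of the activation protocol. -/
def activatedState {a b : ℕ} [NeZero a] [NeZero b] (UA : Matrix (Fin a) (Fin a) ℂ)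
    (UB : Matrix (Fin b) (Fin b) ℂ) (ρ : Matrix (Fin a × Fin b) (Fin a × Fin b) ℂ) :
    Matrix ((Fin a × Fin b) × (Fin a × Fin b)) ((Fin a × Fin b) × (Fin a × Fin b)) ℂ :=
  activationUnitary UA UB * (ρ ⊗ₖ proj (tensorVec (ket0 a) (ket0 b))) *
    (activationUnitary UA UB)ᴴ

/-- Regroup a `(Fin a × Fin b) × (Fin a × Fin b)` matrix as a
`Fin (a*b) × Fin (a*b)` bipartite matrix. -/
def reindexSM {a b : ℕ} (ρ : Matrix ((Fin a × Fin b) × (Fin a × Fin b))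
    ((Fin a × Fin b) × (Fin a × Fin b)) ℂ) :
    Matrix (Fin (a * b) × Fin (a * b)) (Fin (a * b) × Fin (a * b)) ℂ :=
  Matrix.reindex (Equiv.prodCongr finProdFinEquiv finProdFinEquiv)
    (Equiv.prodCongr finProdFinEquiv finProdFinEquiv) ρ

/-- A maximally correlated state `∑_{ij} c_{ij} |i⟩⟨j| ⊗ |i⟩⟨j|`. -/
def maxCorr {n : Type*} [Fintype n] [DecidableEq n] (c : n → n → ℂ) :
    Matrix (n × n) (n × n) ℂ :=
  Matrix.of fun p q => if p.1 = p.2 ∧ q.1 = q.2 then c p.1 q.1 else 0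

/-! ### CLOCC operations -/

/-- The closed set of local operations and classical communication, generated by local
unitaries, local dephasings, addition of local pure ancillas, communication of a
(dephased) subsystem, and relabellings. -/
inductive CLOCC :
    ∀ (A B A' B' : Type), (Matrix (A × B) (A × B) ℂ → Matrix (A' × B') (A' × B') ℂ) → Prop
  | localUnitary {A B : Type} [Fintype A] [DecidableEq A] [Fintype B] [DecidableEq B]
      (UA : Matrix A A ℂ) (UB : Matrix B B ℂ)
      (_ : UA ∈ Matrix.unitaryGroup A ℂ) (_ : UB ∈ Matrix.unitaryGroup B ℂ) :
      CLOCC A B A B fun ρ => (UA ⊗ₖ UB) * ρ * (UA ⊗ₖ UB)ᴴ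
  | dephasingA {A B : Type} [Fintype A] [DecidableEq A] [Fintype B] [DecidableEq B]
      (e : A → A → ℂ) (_ : OrthonormalFam e) :
      CLOCC A B A B fun ρ =>
        ∑ k, (proj (e k) ⊗ₖ (1 : Matrix B B ℂ)) * ρ * (proj (e k) ⊗ₖ (1 : Matrix B B ℂ))
  | dephasingB {A B : Type} [Fintype A] [DecidableEq A] [Fintype B] [DecidableEq B]
      (e : B → B → ℂ) (_ : OrthonormalFam e) :
      CLOCC A B A B fun ρ =>
        ∑ k, ((1 : Matrix A A ℂ) ⊗ₖ proj (e k)) * ρ * ((1 : Matrix A A ℂ) ⊗ₖ proj (e k))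
  | ancillaA {A B C : Type} [Fintype C] (v : C → ℂ) (_ : UnitVec v) :
      CLOCC A B (A × C) B fun ρ =>
        Matrix.of fun p q => ρ (p.1.1, p.2) (q.1.1, q.2) * (v p.1.2 * star (v q.1.2))
  | ancillaB {A B C : Type} [Fintype C] (v : C → ℂ) (_ : UnitVec v) :
      CLOCC A B A (B × C) fun ρ =>
        Matrix.of fun p q => ρ (p.1, p.2.1) (q.1, q.2.1) * (v p.2.2 * star (v q.2.2))
  | commBtoA {A B₁ B₂ : Type} [Fintype A] [DecidableEq A] [Fintype B₁] [DecidableEq B₁]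
      [Fintype B₂] [DecidableEq B₂] (e : B₂ → B₂ → ℂ) (_ : OrthonormalFam e) :
      CLOCC A (B₁ × B₂) (A × B₂) B₁ fun ρ => Matrix.of fun p q =>
        (∑ k, ((1 : Matrix A A ℂ) ⊗ₖ ((1 : Matrix B₁ B₁ ℂ) ⊗ₖ proj (e k))) * ρ *
            ((1 : Matrix A A ℂ) ⊗ₖ ((1 : Matrix B₁ B₁ ℂ) ⊗ₖ proj (e k))))
          (p.1.1, (p.2, p.1.2)) (q.1.1, (q.2, q.1.2))
  | commAtoB {A₁ A₂ B : Type} [Fintype A₁] [DecidableEq A₁] [Fintype A₂] [DecidableEq A₂]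
      [Fintype B] [DecidableEq B] (e : A₂ → A₂ → ℂ) (_ : OrthonormalFam e) :
      CLOCC (A₁ × A₂) B A₁ (B × A₂) fun ρ => Matrix.of fun p q =>
        (∑ k, (((1 : Matrix A₁ A₁ ℂ) ⊗ₖ proj (e k)) ⊗ₖ (1 : Matrix B B ℂ)) * ρ *
            (((1 : Matrix A₁ A₁ ℂ) ⊗ₖ proj (e k)) ⊗ₖ (1 : Matrix B B ℂ)))
          ((p.1, p.2.2), p.2.1) ((q.1, q.2.2), q.2.1)
  | relabel {A B A' B' : Type} (eA : A ≃ A') (eB : B ≃ B') :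
      CLOCC A B A' B' fun ρ =>
        Matrix.reindex (Equiv.prodCongr eA eB) (Equiv.prodCongr eA eB) ρ
  | comp {A B C D E F : Type}
      {Λ : Matrix (A × B) (A × B) ℂ → Matrix (C × D) (C × D) ℂ}
      {Γ : Matrix (C × D) (C × D) ℂ → Matrix (E × F) (E × F) ℂ} :
      CLOCC A B C D Λ → CLOCC C D E F Γ → CLOCC A B E F (Γ ∘ Λ)

/-- The work deficit `Δ(ρ_AB) = inf_{Γ ∈ CLOCC} S(Γ[ρ_AB]) - S(ρ_AB)`. -/
def workDeficit {A B : Type} [Fintype A] [DecidableEq A] [Fintype B] [DecidableEq B]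
    (ρ : Matrix (A × B) (A × B) ℂ) : ℝ :=
  sInf { r | ∃ (a' b' : ℕ)
    (Γ : Matrix (A × B) (A × B) ℂ → Matrix (Fin a' × Fin b') (Fin a' × Fin b') ℂ),
    CLOCC A B (Fin a') (Fin b') Γ ∧ r = entropy (Γ ρ) - entropy ρ }

/-! ### Channels acting on one side -/

/-- The ampliation `id_A ⊗ Φ` of a map `Φ` on the second tensor factor. -/
def ampliate {A B B' : Type*} [Fintype B] (Φ : Matrix B B ℂ → Matrix B' B' ℂ)
    (ρ : Matrix (A × B) (A × B) ℂ) : Matrix (A × B') (A × B') ℂ :=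
  Matrix.of fun p q => Φ (Matrix.of fun b b' => ρ (p.1, b) (q.1, b')) p.2 q.2

/-- The isometric embedding `V = 1_Γ ⊗ |0⟩ : C_Γ → C_Γ ⊗ C_E`. -/
def embed {Γ : Type*} [DecidableEq Γ] (e : ℕ) : Matrix (Γ × Fin (e + 1)) Γ ℂ :=
  Matrix.of fun p g => if p.1 = g ∧ p.2 = 0 then 1 else 0

def zeta (n : ℕ) : ℂ := Complex.exp (2 * Real.pi * Complex.I / n)

lemma zeta_pow (n m : ℕ) : zeta n ^ m = Complex.exp (m * (2 * Real.pi * Complex.I / n)) := by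
  rw [zeta, ← Complex.exp_nat_mul]

lemma conj_zeta_pow (n m : ℕ) :
    (starRingEnd ℂ) (zeta n ^ m) = Complex.exp (-(m * (2 * Real.pi * Complex.I / n))) := by
  rw [zeta_pow, ← Complex.exp_conj]
  congr 1
  simp only [map_mul, map_div₀, Complex.conj_I, map_natCast, map_ofNat,
    Complex.conj_ofReal]
  ring

lemma zeta_mul_conj (n m : ℕ) : zeta n ^ m * (starRingEnd ℂ) (zeta n ^ m) = 1 := by
  rw [conj_zeta_pow, zeta_pow, ← Complex.exp_add, add_neg_cancel, Complex.exp_zero]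

lemma fourier_sum (n : ℕ) [NeZero n] (k l : Fin n) :
    ∑ x : Fin n, zeta n ^ (x.1 * k.1) * (starRingEnd ℂ) (zeta n ^ (x.1 * l.1)) =
      if k = l then (n : ℂ) else 0 := by
  have hn : (n : ℂ) ≠ 0 := Nat.cast_ne_zero.mpr (NeZero.ne n)
  set θ : ℂ := 2 * Real.pi * Complex.I / n with hθ
  have hterm : ∀ x : Fin n,
      zeta n ^ (x.1 * k.1) * (starRingEnd ℂ) (zeta n ^ (x.1 * l.1)) =
        Complex.exp ((((k.1 : ℤ) - l.1 : ℤ) : ℂ) * θ) ^ x.1 := by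
    intro x
    rw [zeta_pow, conj_zeta_pow, ← Complex.exp_add, ← Complex.exp_nat_mul]
    congr 1
    push_cast
    ring
  set w : ℂ := Complex.exp ((((k.1 : ℤ) - l.1 : ℤ) : ℂ) * θ) with hw
  simp only [hterm]
  rw [Fin.sum_univ_eq_sum_range (fun i => w ^ i) n]
  by_cases hkl : k = l
  · subst hkl
    have hww : w = 1 := by rw [hw]; norm_num
    simp [hww]
  · rw [if_neg hkl]
    have hd : ((k.1 : ℤ) - l.1) ≠ 0 := by
      intro h
      exact hkl (Fin.ext (by omega))
    have hwn : w ^ n = 1 := by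
      rw [hw, ← Complex.exp_nat_mul]
      have : (n : ℂ) * ((((k.1 : ℤ) - l.1 : ℤ) : ℂ) * θ) =
          (((k.1 : ℤ) - l.1 : ℤ) : ℂ) * (2 * Real.pi * Complex.I) := by
        rw [hθ]; field_simp
      rw [this]
      exact Complex.exp_int_mul_two_pi_mul_I _
    have hw1 : w ≠ 1 := by
      intro h
      rw [hw, Complex.exp_eq_one_iff] at h
      obtain ⟨m, hm⟩ := h
      have h2pi : (2 * Real.pi * Complex.I : ℂ) ≠ 0 := by
        simp [Real.pi_ne_zero, Complex.I_ne_zero]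
      rw [hθ] at hm
      have hc : ((k.1 : ℂ) - (l.1 : ℂ)) = m * n := by
        field_simp at hm
        push_cast at hm
        linear_combination hm
      have hz : ((k.1 : ℤ) - l.1) = m * n := by exact_mod_cast hc
      have habs : (n : ℤ) ≤ |((k.1 : ℤ) - l.1)| := by
        rw [hz, abs_mul]
        have hm0 : m ≠ 0 := by rintro rfl; simp at hz; exact hd hz
        have h1m : 1 ≤ |m| := Int.one_le_abs hm0
        have : |(n : ℤ)| = (n : ℤ) := abs_of_nonneg (by positivity)
        nlinarith [abs_nonneg (m : ℤ)]
      have hk := k.2; have hl := l.2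
      rcases abs_cases ((k.1 : ℤ) - l.1) with ⟨h1, _⟩ | ⟨h1, _⟩ <;> omega
    rw [geom_sum_eq hw1, hwn]
    simp

section Act
variable {a b : ℕ} [NeZero a] [NeZero b]
variable (UA : Matrix (Fin a) (Fin a) ℂ) (UB : Matrix (Fin b) (Fin b) ℂ)

lemma kron_conjT {l m n p : Type*} (A : Matrix l m ℂ) (B : Matrix n p ℂ) :
    (A ⊗ₖ B)ᴴ = Aᴴ ⊗ₖ Bᴴ := by
  ext p q
  simp [Matrix.conjTranspose_apply, Matrix.kroneckerMap_apply, star_mul']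

lemma proj_psd {n : Type*} [Fintype n] (v : n → ℂ) : (proj v).PosSemidef := by
  have h : proj v = (Matrix.of fun (_ : Unit) j => star (v j))ᴴ *
      (Matrix.of fun (_ : Unit) j => star (v j)) := by
    ext i j
    simp [proj, Matrix.mul_apply, Matrix.conjTranspose_apply]
  rw [h]
  exact Matrix.posSemidef_conjTranspose_mul_self _

lemma kron_psd {m n : Type*} [Fintype m] [Fintype n] [DecidableEq m] [DecidableEq n]
    {A : Matrix m m ℂ} {B : Matrix n n ℂ}
    (hA : A.PosSemidef) (hB : B.PosSemidef) : (A ⊗ₖ B).PosSemidef := by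
  exact hA.kronecker hB

lemma AU_apply (p q : (Fin a × Fin b) × (Fin a × Fin b)) :
    activationUnitary UA UB p q =
      if p.2.1 = q.2.1 + p.1.1 ∧ p.2.2 = q.2.2 + p.1.2 then
        UA p.1.1 q.1.1 * UB p.1.2 q.1.2 else 0 := by
  obtain ⟨⟨pA, pB⟩, ⟨pMA, pMB⟩⟩ := p
  obtain ⟨⟨qA, qB⟩, ⟨qMA, qMB⟩⟩ := q
  simp only [activationUnitary, Matrix.mul_apply, pairKron, cnot,
    Matrix.kroneckerMap_apply, Matrix.of_apply, Matrix.one_apply,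
    Fintype.sum_prod_type, ite_and, Prod.mk.injEq]
  simp [Finset.sum_ite_eq, Finset.sum_ite_eq', mul_ite, ite_mul, mul_one, mul_zero,
    zero_mul, Finset.sum_ite_irrel, Finset.sum_const_zero, eq_comm]
  split_ifs <;> simp
lemma proj00_apply (m m' : Fin a × Fin b) :
    proj (tensorVec (ket0 a) (ket0 b)) m m' =
      if m.1 = 0 ∧ m.2 = 0 ∧ m'.1 = 0 ∧ m'.2 = 0 then 1 else 0 := by
  simp only [proj, tensorVec, ket0, Matrix.of_apply]
  split_ifs with h <;> simp_all <;> tauto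

lemma AUY_apply (ρ : Matrix (Fin a × Fin b) (Fin a × Fin b) ℂ)
    (p q' : (Fin a × Fin b) × (Fin a × Fin b)) :
    (activationUnitary UA UB * (ρ ⊗ₖ proj (tensorVec (ket0 a) (ket0 b)))) p q' =
      if p.2.1 = p.1.1 ∧ p.2.2 = p.1.2 ∧ q'.2.1 = 0 ∧ q'.2.2 = 0 then
        ((UA ⊗ₖ UB) * ρ) (p.1.1, p.1.2) q'.1 else 0 := by
  obtain ⟨⟨pA, pB⟩, ⟨pMA, pMB⟩⟩ := p
  obtain ⟨q'S, ⟨qMA, qMB⟩⟩ := q'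
  simp only [Matrix.mul_apply, AU_apply, Matrix.kroneckerMap_apply, proj00_apply,
    Fintype.sum_prod_type]
  simp only [ite_and, mul_ite, ite_mul, mul_zero, zero_mul, mul_one, one_mul,
    Finset.sum_ite_irrel, Finset.sum_const_zero, Finset.sum_ite_eq, Finset.sum_ite_eq',
    Finset.mem_univ, if_true, zero_add]
  split_ifs <;> simp
  done

lemma activatedState_apply (ρ : Matrix (Fin a × Fin b) (Fin a × Fin b) ℂ)
    (p q : (Fin a × Fin b) × (Fin a × Fin b)) :
    activatedState UA UB ρ p q =
      if p.2 = p.1 ∧ q.2 = q.1 then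
        ((UA ⊗ₖ UB) * ρ * (UA ⊗ₖ UB)ᴴ) p.1 q.1 else 0 := by
  obtain ⟨pS, pM⟩ := p
  obtain ⟨qS, qM⟩ := q
  rw [activatedState, Matrix.mul_apply]
  simp only [AUY_apply, Matrix.conjTranspose_apply, AU_apply, Fintype.sum_prod_type]
  simp only [ite_and, mul_ite, ite_mul, mul_zero, zero_mul, mul_one, one_mul,
    star_zero, apply_ite (star : ℂ → ℂ), Finset.sum_ite_irrel, Finset.sum_const_zero,
    Finset.sum_ite_eq, Finset.sum_ite_eq', Finset.mem_univ, if_true, zero_add,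
    Prod.ext_iff]
  have key : ∀ Z : ℂ,
      (∑ x2 : Fin a, if qM.1 = x2 + qS.1 then
          (∑ x3 : Fin b, if qM.2 = x3 + qS.2 then
            (if pM.1 = pS.1 then if pM.2 = pS.2 then
              (if x2 = 0 then if x3 = 0 then Z else 0 else 0) else 0 else 0) else 0) else 0)
        = if pM.1 = pS.1 then if pM.2 = pS.2 then if qM.1 = qS.1 then if qM.2 = qS.2 then
            Z else 0 else 0 else 0 else 0 := by
    intro Z
    have h3 : ∀ x2 : Fin a,
        (∑ x3 : Fin b, if qM.2 = x3 + qS.2 then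
            (if pM.1 = pS.1 then if pM.2 = pS.2 then
              (if x2 = 0 then if x3 = 0 then Z else 0 else 0) else 0 else 0) else 0)
          = if x2 = 0 then (if pM.1 = pS.1 then if pM.2 = pS.2 then
              if qM.2 = qS.2 then Z else 0 else 0 else 0) else 0 := by
      intro x2
      by_cases h2 : x2 = 0
      · subst h2
        rw [Finset.sum_eq_single (0 : Fin b)]
        · split_ifs <;> simp_all
        · intro x3 _ hx3; split_ifs <;> simp_all
        · simp
      · simp only [if_neg h2]
        rw [Finset.sum_eq_zero]
        intro x3 _
        split_ifs <;> rfl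
    simp only [h3]
    rw [Finset.sum_eq_single (0 : Fin a)]
    · split_ifs <;> simp_all
    · intro x2 _ hx2; split_ifs <;> simp_all
    · simp
  simp only [key, Finset.sum_ite_irrel, Finset.sum_const_zero]
  split_ifs <;> try rfl
  rw [Matrix.mul_apply]
  simp [Matrix.conjTranspose_apply, Matrix.kroneckerMap_apply, Fintype.sum_prod_type]

lemma trace_reindex {n m : Type*} [Fintype n] [Fintype m] [DecidableEq n] [DecidableEq m]
    (e : n ≃ m) (M : Matrix n n ℂ) : (Matrix.reindex e e M).trace = M.trace := by
  simp only [Matrix.reindex_apply, Matrix.trace, Matrix.diag_apply, Matrix.submatrix_apply]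
  exact Equiv.sum_comp e.symm fun i => M i i

lemma star_mul_self_of_unitary {n : Type*} [Fintype n] [DecidableEq n]
    {U : Matrix n n ℂ} (hU : U ∈ Matrix.unitaryGroup n ℂ) : Uᴴ * U = 1 := by
  rw [← Matrix.star_eq_conjTranspose]
  exact (Unitary.mem_iff.mp hU).1

lemma mul_star_self_of_unitary {n : Type*} [Fintype n] [DecidableEq n]
    {U : Matrix n n ℂ} (hU : U ∈ Matrix.unitaryGroup n ℂ) : U * Uᴴ = 1 := by
  rw [← Matrix.star_eq_conjTranspose]
  exact (Unitary.mem_iff.mp hU).2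

lemma kron_star_mul_self (hUA : UA ∈ Matrix.unitaryGroup (Fin a) ℂ)
    (hUB : UB ∈ Matrix.unitaryGroup (Fin b) ℂ) :
    (UA ⊗ₖ UB)ᴴ * (UA ⊗ₖ UB) = 1 := by
  rw [kron_conjT, ← Matrix.mul_kronecker_mul, star_mul_self_of_unitary hUA,
    star_mul_self_of_unitary hUB, Matrix.one_kronecker_one]

lemma activated_density (hUA : UA ∈ Matrix.unitaryGroup (Fin a) ℂ)
    (hUB : UB ∈ Matrix.unitaryGroup (Fin b) ℂ)
    (ρ : Matrix (Fin a × Fin b) (Fin a × Fin b) ℂ) (hρ : IsDensityMatrix ρ) :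
    IsDensityMatrix (reindexSM (activatedState UA UB ρ)) := by
  constructor
  · rw [reindexSM, Matrix.reindex_apply]
    apply Matrix.PosSemidef.submatrix
    exact ((kron_psd hρ.1 (proj_psd _)).mul_mul_conjTranspose_same _)
  · rw [reindexSM, trace_reindex]
    have htr : (activatedState UA UB ρ).trace
        = ((UA ⊗ₖ UB) * ρ * (UA ⊗ₖ UB)ᴴ).trace := by
      simp [Matrix.trace, Matrix.diag_apply, activatedState_apply,
        Fintype.sum_prod_type, Prod.ext_iff, ite_and, Finset.sum_ite_eq,
        Finset.sum_ite_eq']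
    rw [htr, Matrix.trace_mul_cycle, kron_star_mul_self UA UB hUA hUB, Matrix.one_mul]
    exact hρ.2

def krausL (xy : Fin b × Fin a) : Matrix (Fin a) (Fin (a * b)) ℂ :=
  Matrix.of fun α s =>
    (starRingEnd ℂ) (UA (finProdFinEquiv.symm s).1 α) *
      zeta a ^ (xy.2.1 * (finProdFinEquiv.symm s).1.1) *
      (starRingEnd ℂ) (zeta b ^ (xy.1.1 * (finProdFinEquiv.symm s).2.1)) *
      (((Real.sqrt b : ℝ) : ℂ))⁻¹

def krausR (xy : Fin b × Fin a) : Matrix (Fin b) (Fin (a * b)) ℂ :=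
  Matrix.of fun β t =>
    (starRingEnd ℂ) (UB (finProdFinEquiv.symm t).2 β) *
      zeta b ^ (xy.1.1 * (finProdFinEquiv.symm t).2.1) *
      (starRingEnd ℂ) (zeta a ^ (xy.2.1 * (finProdFinEquiv.symm t).1.1)) *
      (((Real.sqrt a : ℝ) : ℂ))⁻¹

lemma invsqrt_mul_invsqrt (n : ℕ) :
    ((((Real.sqrt n : ℝ) : ℂ))⁻¹) * ((((Real.sqrt n : ℝ) : ℂ))⁻¹) = ((n : ℂ))⁻¹ := by
  have h : ((Real.sqrt n : ℝ) : ℂ) * ((Real.sqrt n : ℝ) : ℂ) = ((n : ℝ) : ℂ) := by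
    rw [← Complex.ofReal_mul, Real.mul_self_sqrt (Nat.cast_nonneg n)]
  rw [← mul_inv, h, Complex.ofReal_natCast]

lemma LHL_apply (hUA : UA ∈ Matrix.unitaryGroup (Fin a) ℂ) (xy : Fin b × Fin a)
    (s s' : Fin (a * b)) :
    ((krausL UA xy)ᴴ * krausL UA xy) s s' =
      if (finProdFinEquiv.symm s).1 = (finProdFinEquiv.symm s').1 then
        zeta b ^ (xy.1.1 * (finProdFinEquiv.symm s).2.1) *
          (starRingEnd ℂ) (zeta b ^ (xy.1.1 * (finProdFinEquiv.symm s').2.1)) * ((b : ℂ))⁻¹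
      else 0 := by
  rw [Matrix.mul_apply]
  have h1 : ∀ α : Fin a, ((krausL UA xy)ᴴ) s α * krausL UA xy α s' =
      (UA (finProdFinEquiv.symm s).1 α * (starRingEnd ℂ) (UA (finProdFinEquiv.symm s').1 α)) *
        ((starRingEnd ℂ) (zeta a ^ (xy.2.1 * (finProdFinEquiv.symm s).1.1)) *
          zeta a ^ (xy.2.1 * (finProdFinEquiv.symm s').1.1) *
          (zeta b ^ (xy.1.1 * (finProdFinEquiv.symm s).2.1) *
            (starRingEnd ℂ) (zeta b ^ (xy.1.1 * (finProdFinEquiv.symm s').2.1))) *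
          ((((Real.sqrt b : ℝ) : ℂ))⁻¹ * (((Real.sqrt b : ℝ) : ℂ))⁻¹)) := by
    intro α
    simp only [Matrix.conjTranspose_apply, krausL, Matrix.of_apply, star_mul', map_mul,
      Complex.conj_conj, RCLike.star_def, map_inv₀, Complex.conj_ofReal]
    ring
  rw [Finset.sum_congr rfl fun α _ => h1 α, ← Finset.sum_mul]
  have h2 : ∑ α : Fin a, UA (finProdFinEquiv.symm s).1 α *
      (starRingEnd ℂ) (UA (finProdFinEquiv.symm s').1 α) =
      if (finProdFinEquiv.symm s).1 = (finProdFinEquiv.symm s').1 then 1 else 0 := by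
    have := mul_star_self_of_unitary hUA
    have h3 := congrArg (fun M => M (finProdFinEquiv.symm s).1 (finProdFinEquiv.symm s').1) this
    simpa [Matrix.mul_apply, Matrix.conjTranspose_apply, Matrix.one_apply] using h3
  rw [h2]
  split_ifs with h
  · rw [h, one_mul]
    have hc : (starRingEnd ℂ) (zeta a ^ (xy.2.1 * (finProdFinEquiv.symm s').1.1)) *
        zeta a ^ (xy.2.1 * (finProdFinEquiv.symm s').1.1) = 1 := by
      rw [mul_comm]; exact zeta_mul_conj a _
    rw [invsqrt_mul_invsqrt b]
    calc (starRingEnd ℂ) (zeta a ^ (xy.2.1 * (finProdFinEquiv.symm s').1.1)) *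
          zeta a ^ (xy.2.1 * (finProdFinEquiv.symm s').1.1) *
          (zeta b ^ (xy.1.1 * (finProdFinEquiv.symm s).2.1) *
            (starRingEnd ℂ) (zeta b ^ (xy.1.1 * (finProdFinEquiv.symm s').2.1))) * ((b:ℂ))⁻¹
        = 1 * (zeta b ^ (xy.1.1 * (finProdFinEquiv.symm s).2.1) *
            (starRingEnd ℂ) (zeta b ^ (xy.1.1 * (finProdFinEquiv.symm s').2.1))) * ((b:ℂ))⁻¹ := by
          rw [hc]
      _ = zeta b ^ (xy.1.1 * (finProdFinEquiv.symm s).2.1) *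
            (starRingEnd ℂ) (zeta b ^ (xy.1.1 * (finProdFinEquiv.symm s').2.1)) * ((b:ℂ))⁻¹ := by
          ring
  · rw [zero_mul]

lemma RHR_apply (hUB : UB ∈ Matrix.unitaryGroup (Fin b) ℂ) (xy : Fin b × Fin a)
    (t t' : Fin (a * b)) :
    ((krausR UB xy)ᴴ * krausR UB xy) t t' =
      if (finProdFinEquiv.symm t).2 = (finProdFinEquiv.symm t').2 then
        zeta a ^ (xy.2.1 * (finProdFinEquiv.symm t).1.1) *
          (starRingEnd ℂ) (zeta a ^ (xy.2.1 * (finProdFinEquiv.symm t').1.1)) * ((a : ℂ))⁻¹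
      else 0 := by
  rw [Matrix.mul_apply]
  have h1 : ∀ β : Fin b, ((krausR UB xy)ᴴ) t β * krausR UB xy β t' =
      (UB (finProdFinEquiv.symm t).2 β * (starRingEnd ℂ) (UB (finProdFinEquiv.symm t').2 β)) *
        ((starRingEnd ℂ) (zeta b ^ (xy.1.1 * (finProdFinEquiv.symm t).2.1)) *
          zeta b ^ (xy.1.1 * (finProdFinEquiv.symm t').2.1) *
          (zeta a ^ (xy.2.1 * (finProdFinEquiv.symm t).1.1) *
            (starRingEnd ℂ) (zeta a ^ (xy.2.1 * (finProdFinEquiv.symm t').1.1))) *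
          ((((Real.sqrt a : ℝ) : ℂ))⁻¹ * (((Real.sqrt a : ℝ) : ℂ))⁻¹)) := by
    intro β
    simp only [Matrix.conjTranspose_apply, krausR, Matrix.of_apply, star_mul', map_mul,
      Complex.conj_conj, RCLike.star_def, map_inv₀, Complex.conj_ofReal]
    ring
  rw [Finset.sum_congr rfl fun β _ => h1 β, ← Finset.sum_mul]
  have h2 : ∑ β : Fin b, UB (finProdFinEquiv.symm t).2 β *
      (starRingEnd ℂ) (UB (finProdFinEquiv.symm t').2 β) =
      if (finProdFinEquiv.symm t).2 = (finProdFinEquiv.symm t').2 then 1 else 0 := by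
    have := mul_star_self_of_unitary hUB
    have h3 := congrArg (fun M => M (finProdFinEquiv.symm t).2 (finProdFinEquiv.symm t').2) this
    simpa [Matrix.mul_apply, Matrix.conjTranspose_apply, Matrix.one_apply] using h3
  rw [h2]
  split_ifs with h
  · rw [h, one_mul]
    have hc : (starRingEnd ℂ) (zeta b ^ (xy.1.1 * (finProdFinEquiv.symm t').2.1)) *
        zeta b ^ (xy.1.1 * (finProdFinEquiv.symm t').2.1) = 1 := by
      rw [mul_comm]; exact zeta_mul_conj b _
    rw [invsqrt_mul_invsqrt a]
    calc (starRingEnd ℂ) (zeta b ^ (xy.1.1 * (finProdFinEquiv.symm t').2.1)) *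
          zeta b ^ (xy.1.1 * (finProdFinEquiv.symm t').2.1) *
          (zeta a ^ (xy.2.1 * (finProdFinEquiv.symm t).1.1) *
            (starRingEnd ℂ) (zeta a ^ (xy.2.1 * (finProdFinEquiv.symm t').1.1))) * ((a:ℂ))⁻¹
        = 1 * (zeta a ^ (xy.2.1 * (finProdFinEquiv.symm t).1.1) *
            (starRingEnd ℂ) (zeta a ^ (xy.2.1 * (finProdFinEquiv.symm t').1.1))) * ((a:ℂ))⁻¹ := by
          rw [hc]
      _ = zeta a ^ (xy.2.1 * (finProdFinEquiv.symm t).1.1) *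
            (starRingEnd ℂ) (zeta a ^ (xy.2.1 * (finProdFinEquiv.symm t').1.1)) * ((a:ℂ))⁻¹ := by
          ring
  · rw [zero_mul]

lemma kraus_complete (hUA : UA ∈ Matrix.unitaryGroup (Fin a) ℂ)
    (hUB : UB ∈ Matrix.unitaryGroup (Fin b) ℂ) :
    ∑ k : Fin (b * a),
        ((krausL UA (finProdFinEquiv.symm k)) ⊗ₖ (krausR UB (finProdFinEquiv.symm k)))ᴴ *
          ((krausL UA (finProdFinEquiv.symm k)) ⊗ₖ (krausR UB (finProdFinEquiv.symm k))) = 1 := by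
  rw [Equiv.sum_comp (finProdFinEquiv.symm : Fin (b * a) ≃ Fin b × Fin a)
    (fun xy => ((krausL UA xy) ⊗ₖ (krausR UB xy))ᴴ * ((krausL UA xy) ⊗ₖ (krausR UB xy)))]
  have hterm : ∀ xy : Fin b × Fin a,
      ((krausL UA xy) ⊗ₖ (krausR UB xy))ᴴ * ((krausL UA xy) ⊗ₖ (krausR UB xy)) =
        ((krausL UA xy)ᴴ * krausL UA xy) ⊗ₖ ((krausR UB xy)ᴴ * krausR UB xy) := by
    intro xy
    rw [kron_conjT, ← Matrix.mul_kronecker_mul]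
  rw [Finset.sum_congr rfl fun xy _ => hterm xy]
  ext ⟨s, t⟩ ⟨s', t'⟩
  rw [Matrix.sum_apply]
  have h1 : ∀ xy : Fin b × Fin a,
      (((krausL UA xy)ᴴ * krausL UA xy) ⊗ₖ ((krausR UB xy)ᴴ * krausR UB xy)) (s, t) (s', t') =
        (if (finProdFinEquiv.symm s).1 = (finProdFinEquiv.symm s').1 then
          zeta b ^ (xy.1.1 * (finProdFinEquiv.symm s).2.1) *
            (starRingEnd ℂ) (zeta b ^ (xy.1.1 * (finProdFinEquiv.symm s').2.1)) * ((b : ℂ))⁻¹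
        else 0) *
        (if (finProdFinEquiv.symm t).2 = (finProdFinEquiv.symm t').2 then
          zeta a ^ (xy.2.1 * (finProdFinEquiv.symm t).1.1) *
            (starRingEnd ℂ) (zeta a ^ (xy.2.1 * (finProdFinEquiv.symm t').1.1)) * ((a : ℂ))⁻¹
        else 0) := by
    intro xy
    rw [Matrix.kroneckerMap_apply, LHL_apply UA hUA xy, RHR_apply UB hUB xy]
  rw [Finset.sum_congr rfl fun xy _ => h1 xy]
  rw [Fintype.sum_prod_type]
  simp only [ite_mul, mul_ite, mul_zero, zero_mul, Finset.sum_ite_irrel, Finset.sum_const_zero]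
  split_ifs with h1' h2'
  · have hsum : ∀ x : Fin b, ∑ y : Fin a,
        zeta b ^ (x.1 * (finProdFinEquiv.symm s).2.1) *
          (starRingEnd ℂ) (zeta b ^ (x.1 * (finProdFinEquiv.symm s').2.1)) * ((b : ℂ))⁻¹ *
        (zeta a ^ (y.1 * (finProdFinEquiv.symm t).1.1) *
          (starRingEnd ℂ) (zeta a ^ (y.1 * (finProdFinEquiv.symm t').1.1)) * ((a : ℂ))⁻¹) =
        (zeta b ^ (x.1 * (finProdFinEquiv.symm s).2.1) *
          (starRingEnd ℂ) (zeta b ^ (x.1 * (finProdFinEquiv.symm s').2.1)) * ((b : ℂ))⁻¹) *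
        ((if (finProdFinEquiv.symm t).1 = (finProdFinEquiv.symm t').1 then (a : ℂ) else 0) *
          ((a : ℂ))⁻¹) := by
      intro x
      rw [← Finset.mul_sum]
      congr 1
      rw [← Finset.sum_mul]
      congr 1
      exact fourier_sum a _ _
    rw [Finset.sum_congr rfl fun x _ => hsum x, ← Finset.sum_mul, ← Finset.sum_mul,
      fourier_sum b]
    have hna : ((a : ℂ)) ≠ 0 := Nat.cast_ne_zero.mpr (NeZero.ne a)
    have hnb : ((b : ℂ)) ≠ 0 := Nat.cast_ne_zero.mpr (NeZero.ne b)
    rw [Matrix.one_apply]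
    by_cases hs2 : (finProdFinEquiv.symm s).2 = (finProdFinEquiv.symm s').2 <;>
      by_cases ht1 : (finProdFinEquiv.symm t).1 = (finProdFinEquiv.symm t').1
    · have hss : s = s' := finProdFinEquiv.symm.injective (Prod.ext h2' hs2)
      have htt : t = t' := finProdFinEquiv.symm.injective (Prod.ext ht1 h1')
      subst hss; subst htt
      rw [if_pos rfl, if_pos rfl, if_pos rfl, mul_inv_cancel₀ hnb, mul_inv_cancel₀ hna,
        one_mul]
    · have hne : ¬((s, t) = (s', t')) := by
        intro hc
        rw [Prod.mk.injEq] at hc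
        exact ht1 (by rw [hc.2])
      rw [if_neg ht1, if_neg hne]
      ring
    · have hne : ¬((s, t) = (s', t')) := by
        intro hc
        rw [Prod.mk.injEq] at hc
        exact hs2 (by rw [hc.1])
      rw [if_neg hs2, if_neg hne]
      ring
    · have hne : ¬((s, t) = (s', t')) := by
        intro hc
        rw [Prod.mk.injEq] at hc
        exact hs2 (by rw [hc.1])
      rw [if_neg hs2, if_neg hne]
      ring
  · have hne : ¬((s, t) = (s', t')) := by
      intro hc
      rw [Prod.mk.injEq] at hc
      exact h2' (by rw [hc.1])
    rw [Matrix.one_apply, if_neg hne]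
  · have hne : ¬((s, t) = (s', t')) := by
      intro hc
      rw [Prod.mk.injEq] at hc
      exact h1' (by rw [hc.2])
    rw [Matrix.one_apply, if_neg hne]

def corr (M : Matrix (Fin a × Fin b) (Fin a × Fin b) ℂ) :
    Matrix ((Fin a × Fin b) × (Fin a × Fin b)) ((Fin a × Fin b) × (Fin a × Fin b)) ℂ :=
  Matrix.of fun p q => if p.2 = p.1 ∧ q.2 = q.1 then M p.1 q.1 else 0

lemma activated_eq_corr (ρ : Matrix (Fin a × Fin b) (Fin a × Fin b) ℂ) :
    activatedState UA UB ρ = corr ((UA ⊗ₖ UB) * ρ * (UA ⊗ₖ UB)ᴴ) := by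
  ext p q
  rw [activatedState_apply, corr, Matrix.of_apply]

lemma kraus_sandwich (hUA : UA ∈ Matrix.unitaryGroup (Fin a) ℂ)
    (hUB : UB ∈ Matrix.unitaryGroup (Fin b) ℂ)
    (M : Matrix (Fin a × Fin b) (Fin a × Fin b) ℂ) (xy : Fin b × Fin a) :
    (krausL UA xy ⊗ₖ krausR UB xy) * reindexSM (corr M) *
        (krausL UA xy ⊗ₖ krausR UB xy)ᴴ =
      ((b : ℂ))⁻¹ • (((a : ℂ))⁻¹ • ((UA ⊗ₖ UB)ᴴ * M * (UA ⊗ₖ UB))) := by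
  have hmid : ∀ s t s' t' : Fin (a * b),
      reindexSM (corr M) (s, t) (s', t') =
        if t = s ∧ t' = s' then
          M (finProdFinEquiv.symm s) (finProdFinEquiv.symm s')
        else 0 := by
    intro s t s' t'
    rw [reindexSM, Matrix.reindex_apply, Matrix.submatrix_apply]
    simp only [Equiv.prodCongr_symm, Equiv.prodCongr_apply, Prod.map_apply, corr,
      Matrix.of_apply, EmbeddingLike.apply_eq_iff_eq]
  ext ⟨α, β⟩ ⟨α', β'⟩
  rw [Matrix.mul_apply]
  simp only [Matrix.mul_apply, Matrix.conjTranspose_apply, Matrix.kroneckerMap_apply,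
    Fintype.sum_prod_type, hmid, ite_and, mul_ite, ite_mul, mul_zero, zero_mul,
    Finset.sum_ite_irrel, Finset.sum_const_zero, Finset.sum_ite_eq, Finset.sum_ite_eq',
    Finset.mem_univ, if_true]
  have hLR : ∀ s : Fin (a * b),
      krausL UA xy α s * krausR UB xy β s =
        (starRingEnd ℂ) (UA (finProdFinEquiv.symm s).1 α) *
          (starRingEnd ℂ) (UB (finProdFinEquiv.symm s).2 β) *
          ((((Real.sqrt b : ℝ) : ℂ))⁻¹ * (((Real.sqrt a : ℝ) : ℂ))⁻¹) := by
    intro s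
    simp only [krausL, krausR, Matrix.of_apply]
    calc _ = (zeta a ^ (xy.2.1 * (finProdFinEquiv.symm s).1.1) *
              (starRingEnd ℂ) (zeta a ^ (xy.2.1 * (finProdFinEquiv.symm s).1.1))) *
            (zeta b ^ (xy.1.1 * (finProdFinEquiv.symm s).2.1) *
              (starRingEnd ℂ) (zeta b ^ (xy.1.1 * (finProdFinEquiv.symm s).2.1))) *
            ((starRingEnd ℂ) (UA (finProdFinEquiv.symm s).1 α) *
              (starRingEnd ℂ) (UB (finProdFinEquiv.symm s).2 β) *
              ((((Real.sqrt b : ℝ) : ℂ))⁻¹ * (((Real.sqrt a : ℝ) : ℂ))⁻¹)) := by ring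
      _ = _ := by rw [zeta_mul_conj, zeta_mul_conj, one_mul, one_mul]
  have hLRs : ∀ s : Fin (a * b),
      star (krausL UA xy α' s * krausR UB xy β' s) =
        UA (finProdFinEquiv.symm s).1 α' * UB (finProdFinEquiv.symm s).2 β' *
          ((((Real.sqrt b : ℝ) : ℂ))⁻¹ * (((Real.sqrt a : ℝ) : ℂ))⁻¹) := by
    intro s
    simp only [krausL, krausR, Matrix.of_apply, RCLike.star_def, map_mul, map_inv₀,
      Complex.conj_conj, Complex.conj_ofReal]
    calc _ = (zeta a ^ (xy.2.1 * (finProdFinEquiv.symm s).1.1) *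
              (starRingEnd ℂ) (zeta a ^ (xy.2.1 * (finProdFinEquiv.symm s).1.1))) *
            (zeta b ^ (xy.1.1 * (finProdFinEquiv.symm s).2.1) *
              (starRingEnd ℂ) (zeta b ^ (xy.1.1 * (finProdFinEquiv.symm s).2.1))) *
            (UA (finProdFinEquiv.symm s).1 α' * UB (finProdFinEquiv.symm s).2 β' *
              ((((Real.sqrt b : ℝ) : ℂ))⁻¹ * (((Real.sqrt a : ℝ) : ℂ))⁻¹)) := by ring
      _ = _ := by rw [zeta_mul_conj, zeta_mul_conj, one_mul, one_mul]
  simp only [hLR, hLRs, Matrix.smul_apply, smul_eq_mul, Matrix.mul_apply,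
    Matrix.conjTranspose_apply, Matrix.kroneckerMap_apply]
  rw [← Equiv.sum_comp (finProdFinEquiv.symm : Fin (a * b) ≃ Fin a × Fin b)
    (fun l => (∑ k : Fin a × Fin b,
      star (UA k.1 α * UB k.2 β) * M k l) * (UA l.1 α' * UB l.2 β'))]
  simp only [← Equiv.sum_comp (finProdFinEquiv.symm : Fin (a * b) ≃ Fin a × Fin b)]
  rw [Finset.mul_sum, Finset.mul_sum]
  simp only [Finset.sum_mul, Finset.mul_sum, star_mul', RCLike.star_def]
  have hcc : ((((Real.sqrt b : ℝ) : ℂ))⁻¹ * (((Real.sqrt a : ℝ) : ℂ))⁻¹) *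
      ((((Real.sqrt b : ℝ) : ℂ))⁻¹ * (((Real.sqrt a : ℝ) : ℂ))⁻¹) =
      ((b : ℂ))⁻¹ * ((a : ℂ))⁻¹ := by
    calc ((((Real.sqrt b : ℝ) : ℂ))⁻¹ * (((Real.sqrt a : ℝ) : ℂ))⁻¹) *
        ((((Real.sqrt b : ℝ) : ℂ))⁻¹ * (((Real.sqrt a : ℝ) : ℂ))⁻¹)
        = ((((Real.sqrt b : ℝ) : ℂ))⁻¹ * (((Real.sqrt b : ℝ) : ℂ))⁻¹) *
          ((((Real.sqrt a : ℝ) : ℂ))⁻¹ * (((Real.sqrt a : ℝ) : ℂ))⁻¹) := by ring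
      _ = ((b : ℂ))⁻¹ * ((a : ℂ))⁻¹ := by
          rw [invsqrt_mul_invsqrt, invsqrt_mul_invsqrt]
  refine Finset.sum_congr rfl fun x _ => Finset.sum_congr rfl fun x1 _ => ?_
  linear_combination ((starRingEnd ℂ) (UA (finProdFinEquiv.symm x1).1 α) *
    (starRingEnd ℂ) (UB (finProdFinEquiv.symm x1).2 β) *
    M (finProdFinEquiv.symm x1) (finProdFinEquiv.symm x) *
    UA (finProdFinEquiv.symm x).1 α' * UB (finProdFinEquiv.symm x).2 β') * hcc
  done

lemma kraus_channel_sum (hUA : UA ∈ Matrix.unitaryGroup (Fin a) ℂ)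
    (hUB : UB ∈ Matrix.unitaryGroup (Fin b) ℂ)
    (ρ : Matrix (Fin a × Fin b) (Fin a × Fin b) ℂ) :
    ∑ k : Fin (b * a),
      ((krausL UA (finProdFinEquiv.symm k)) ⊗ₖ (krausR UB (finProdFinEquiv.symm k))) *
        reindexSM (activatedState UA UB ρ) *
        ((krausL UA (finProdFinEquiv.symm k)) ⊗ₖ (krausR UB (finProdFinEquiv.symm k)))ᴴ
      = ρ := by
  have hone : ∀ xy : Fin b × Fin a,
      (krausL UA xy ⊗ₖ krausR UB xy) * reindexSM (activatedState UA UB ρ) *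
        (krausL UA xy ⊗ₖ krausR UB xy)ᴴ = ((b : ℂ))⁻¹ • (((a : ℂ))⁻¹ • ρ) := by
    intro xy
    rw [activated_eq_corr UA UB ρ, kraus_sandwich UA UB hUA hUB]
    have h1 := kron_star_mul_self UA UB hUA hUB
    have h2 : (UA ⊗ₖ UB)ᴴ * ((UA ⊗ₖ UB) * ρ * (UA ⊗ₖ UB)ᴴ) * (UA ⊗ₖ UB) = ρ := by
      calc (UA ⊗ₖ UB)ᴴ * ((UA ⊗ₖ UB) * ρ * (UA ⊗ₖ UB)ᴴ) * (UA ⊗ₖ UB)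
          = ((UA ⊗ₖ UB)ᴴ * (UA ⊗ₖ UB)) * ρ * ((UA ⊗ₖ UB)ᴴ * (UA ⊗ₖ UB)) := by
            noncomm_ring
        _ = ρ := by rw [h1, Matrix.one_mul, Matrix.mul_one]
    rw [h2]
  rw [Finset.sum_congr rfl fun k _ => hone (finProdFinEquiv.symm k)]
  rw [Finset.sum_const, Finset.card_univ, Fintype.card_fin]
  have hna : ((a : ℂ)) ≠ 0 := Nat.cast_ne_zero.mpr (NeZero.ne a)
  have hnb : ((b : ℂ)) ≠ 0 := Nat.cast_ne_zero.mpr (NeZero.ne b)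
  have hs : ((b * a : ℕ) : ℂ) • (((b : ℂ))⁻¹ • (((a : ℂ))⁻¹ • ρ)) = ρ := by
    rw [smul_smul, smul_smul]
    have h3 : ((b * a : ℕ) : ℂ) * ((b : ℂ))⁻¹ * ((a : ℂ))⁻¹ = 1 := by
      push_cast
      field_simp
    rw [h3, one_smul]
  rw [← Nat.cast_smul_eq_nsmul ℂ]
  exact hs

end Act

/-- Piani–Adesso: for any bipartite state, any quantumness-of-correlations
measure defined through the activation protocol from an entanglement monotone `E` is
lower bounded by the entanglement of the state itself: `Q_E(ρ_AB) ≥ E(ρ_AB)`. -/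
theorem activation_quantumness_ge_entanglement {a b : ℕ} [NeZero a] [NeZero b]
    (E : ∀ n m : ℕ, Matrix (Fin n × Fin m) (Fin n × Fin m) ℂ → ℝ)
    (hmono : ∀ (n m n' m' : ℕ) (σ : Matrix (Fin n × Fin m) (Fin n × Fin m) ℂ),
      IsDensityMatrix σ →
      ∀ Λ : Matrix (Fin n × Fin m) (Fin n × Fin m) ℂ →
        Matrix (Fin n' × Fin m') (Fin n' × Fin m') ℂ,
        IsLOCCChannel Λ → E n' m' (Λ σ) ≤ E n m σ)
    (hvanish : ∀ (n m : ℕ) (σ : Matrix (Fin n × Fin m) (Fin n × Fin m) ℂ),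
      IsSeparable σ → E n m σ = 0)
    (ρ : Matrix (Fin a × Fin b) (Fin a × Fin b) ℂ) (hρ : IsDensityMatrix ρ) :
    E a b ρ ≤ sInf { r | ∃ UA ∈ Matrix.unitaryGroup (Fin a) ℂ,
      ∃ UB ∈ Matrix.unitaryGroup (Fin b) ℂ,
      r = E (a * b) (a * b) (reindexSM (activatedState UA UB ρ)) } := by
  apply le_csInf
  · exact ⟨E (a * b) (a * b) (reindexSM (activatedState 1 1 ρ)), 1, one_mem _, 1, one_mem _,
      rfl⟩
  · rintro r ⟨UA, hUA, UB, hUB, rfl⟩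
    have hD := activated_density UA UB hUA hUB ρ hρ
    set Λ : Matrix (Fin (a * b) × Fin (a * b)) (Fin (a * b) × Fin (a * b)) ℂ →
        Matrix (Fin a × Fin b) (Fin a × Fin b) ℂ :=
      fun X => ∑ k : Fin (b * a),
        ((krausL UA (finProdFinEquiv.symm k)) ⊗ₖ (krausR UB (finProdFinEquiv.symm k))) * X *
          ((krausL UA (finProdFinEquiv.symm k)) ⊗ₖ (krausR UB (finProdFinEquiv.symm k)))ᴴ
      with hΛ
    have hL : IsLOCCChannel Λ :=
      ⟨b * a, fun k => krausL UA (finProdFinEquiv.symm k),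
        fun k => krausR UB (finProdFinEquiv.symm k),
        kraus_complete UA UB hUA hUB, fun _ => rfl⟩
    have hact : Λ (reindexSM (activatedState UA UB ρ)) = ρ :=
      kraus_channel_sum UA UB hUA hUB ρ
    calc E a b ρ = E a b (Λ (reindexSM (activatedState UA UB ρ))) := by rw [hact]
      _ ≤ E (a * b) (a * b) (reindexSM (activatedState UA UB ρ)) :=
          hmono (a * b) (a * b) a b _ hD Λ hL

end QI
end
end

section
/- Naimark's theorem: given a quantum measurement with POVM elements {M_x}_{x=0}^{M} on C_Γ (positive semidefinite operators summing to the identity), there exist an isometry V : C_Γ → C_{Γ'} and a projective measurement {Π_x}_{x=0}^{M} on C_{Γ'} (orthogonal projectors summing to the identity) such that Tr(M_x ρ) = Tr(Π_x V ρ V†) for every density matrix ρ on C_Γ and every outcome x. In particular, for the embedding V = I_Γ ⊗ |0⟩_E into C_Γ ⊗ C_E, the POVM elements are recovered as M_x = (I_Γ ⊗ ⟨0|_E) Π_x (I_Γ ⊗ |0⟩_E). -/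
open scoped Matrix Kronecker ComplexOrder Classical
open Filter

noncomputable section

namespace QI

lemma exists_unitary_extension {N G : Type*} [Fintype N] [DecidableEq N]
    [Fintype G] [DecidableEq G] (ι : G → N) (hι : Function.Injective ι)
    (W : Matrix N G ℂ) (hW : Wᴴ * W = 1) :
    ∃ U : Matrix N N ℂ, Uᴴ * U = 1 ∧ ∀ p g, U p (ι g) = W p g := by
  classical
  set Q : Matrix N N ℂ := 1 - W * Wᴴ with hQdef
  have hA : (W * Wᴴ) * (W * Wᴴ) = W * Wᴴ := by
    rw [Matrix.mul_assoc W Wᴴ (W * Wᴴ), ← Matrix.mul_assoc Wᴴ W Wᴴ, hW, Matrix.one_mul]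
  have hQH : Q.IsHermitian := by
    unfold Matrix.IsHermitian
    simp [hQdef, Matrix.conjTranspose_sub, Matrix.conjTranspose_mul]
  have hQQ : Q * Q = Q := by
    rw [hQdef, sub_mul, one_mul, mul_sub, mul_one, hA]
    abel
  set U₀ : Matrix N N ℂ := (hQH.eigenvectorUnitary : Matrix N N ℂ) with hU₀def
  have hU₀mem : U₀ ∈ Matrix.unitaryGroup N ℂ := hQH.eigenvectorUnitary.2
  have hU₀l : star U₀ * U₀ = 1 := Matrix.mem_unitaryGroup_iff'.mp hU₀mem
  have hU₀r : U₀ * star U₀ = 1 := Matrix.mem_unitaryGroup_iff.mp hU₀mem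
  set lam := hQH.eigenvalues with hlamdef
  set D : Matrix N N ℂ := Matrix.diagonal (RCLike.ofReal ∘ lam) with hDdef
  have hspec : Q = U₀ * D * star U₀ := hQH.spectral_theorem
  have hD' : D = star U₀ * Q * U₀ := by
    rw [hspec]
    calc D = (star U₀ * U₀) * D * (star U₀ * U₀) := by rw [hU₀l, one_mul, mul_one]
      _ = star U₀ * (U₀ * D * star U₀) * U₀ := by noncomm_ring
  have hDD : D * D = D := by
    rw [hD']
    calc (star U₀ * Q * U₀) * (star U₀ * Q * U₀)
        = star U₀ * (Q * (U₀ * star U₀) * Q) * U₀ := by noncomm_ring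
      _ = star U₀ * Q * U₀ := by rw [hU₀r, mul_one, hQQ]
  have hzo : ∀ i, lam i = 0 ∨ lam i = 1 := by
    intro i
    have h := congrFun (congrFun hDD i) i
    rw [hDdef, Matrix.diagonal_mul_diagonal] at h
    simp only [Matrix.diagonal_apply_eq, Function.comp_apply, Pi.mul_apply] at h
    have h2 : lam i * lam i = lam i := by exact_mod_cast h
    have h3 : lam i * (lam i - 1) = 0 := by rw [mul_sub, mul_one, h2, sub_self]
    rcases mul_eq_zero.mp h3 with h4 | h4
    · exact Or.inl h4
    · exact Or.inr (by linarith [sub_eq_zero.mp h4])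
  -- cardinality bookkeeping
  have htr1 : Q.trace = (Fintype.card N : ℂ) - (Fintype.card G : ℂ) := by
    rw [hQdef, Matrix.trace_sub, Matrix.trace_one, Matrix.trace_mul_comm, hW, Matrix.trace_one]
  have htr2 : Q.trace = ∑ i, (lam i : ℂ) := by
    rw [hspec, Matrix.trace_mul_cycle, hU₀l, one_mul, hDdef, Matrix.trace_diagonal]
    simp [Function.comp]
  have hsum01 : ∑ i, (lam i : ℂ) =
      ((Finset.univ.filter (fun i : N => lam i = 1)).card : ℂ) := by
    rw [← Finset.sum_boole]
    refine Finset.sum_congr rfl fun i _ => ?_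
    rcases hzo i with h | h <;> simp [h]
  have hGN : Fintype.card G ≤ Fintype.card N := Fintype.card_le_of_injective ι hι
  have hcardS : Fintype.card {i : N // lam i = 1} = Fintype.card N - Fintype.card G := by
    have h1 : ((Fintype.card {i : N // lam i = 1} + Fintype.card G : ℕ) : ℂ)
        = ((Fintype.card N : ℕ) : ℂ) := by
      rw [Fintype.card_subtype]
      push_cast
      rw [← hsum01, ← htr2, htr1]
      ring
    have h2 := Nat.cast_injective (R := ℂ) h1
    omega
  have hcardT : Fintype.card {q : N // ¬ q ∈ Set.range ι}
      = Fintype.card N - Fintype.card G := by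
    rw [Fintype.card_subtype_compl]
    congr 1
    exact Fintype.card_congr (Equiv.ofInjective ι hι).symm
  have ε : {q : N // ¬ q ∈ Set.range ι} ≃ {i : N // lam i = 1} :=
    Fintype.equivOfCardEq (hcardT.trans hcardS.symm)
  -- the candidate unitary
  set U : Matrix N N ℂ := Matrix.of fun p q =>
    if h : q ∈ Set.range ι then W p h.choose else U₀ p (ε ⟨q, h⟩ : {i : N // lam i = 1})
    with hUdef
  have hUι : ∀ p g, U p (ι g) = W p g := by
    intro p g
    have h : (ι g) ∈ Set.range ι := ⟨g, rfl⟩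
    simp only [hUdef, Matrix.of_apply, dif_pos h]
    congr 1
    exact hι h.choose_spec
  -- orthogonality of the new columns with W
  have hWc : ∀ i : N, lam i = 1 → ∀ g, ∑ p, star (W p g) * U₀ p i = 0 := by
    intro i hi g
    set v : N → ℂ := fun p => U₀ p i with hvdef
    have hQU : Q * U₀ = U₀ * D := by
      rw [hspec, mul_assoc (U₀ * D), hU₀l, mul_one]
    have hQv : Q.mulVec v = v := by
      funext p
      have h := congrFun (congrFun hQU p) i
      rw [Matrix.mul_diagonal] at h
      have : (Q * U₀) p i = Q.mulVec v p := by
        simp [Matrix.mul_apply, Matrix.mulVec, dotProduct, hvdef]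
      rw [this] at h
      rw [h]
      simp [hvdef, hi]
    have hWWv : (W * Wᴴ).mulVec v = 0 := by
      have h1 : W * Wᴴ = 1 - Q := by rw [hQdef, sub_sub_cancel]
      rw [h1, Matrix.sub_mulVec, Matrix.one_mulVec, hQv, sub_self]
    have hfinal : Wᴴ.mulVec v = 0 := by
      calc Wᴴ.mulVec v = ((Wᴴ * W) * Wᴴ).mulVec v := by rw [hW, Matrix.one_mul]
        _ = Wᴴ.mulVec ((W * Wᴴ).mulVec v) := by rw [Matrix.mulVec_mulVec, Matrix.mul_assoc]
        _ = 0 := by rw [hWWv, Matrix.mulVec_zero]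
    have h := congrFun hfinal g
    simpa [Matrix.mulVec, dotProduct, Matrix.conjTranspose_apply, hvdef] using h
  have hWW : ∀ g g', ∑ p, star (W p g) * W p g'
      = if g = g' then (1 : ℂ) else 0 := by
    intro g g'
    have h := congrFun (congrFun hW g) g'
    simpa [Matrix.mul_apply, Matrix.conjTranspose_apply, Matrix.one_apply] using h
  have hCC : ∀ (i j : N), lam i = 1 → lam j = 1 →
      ∑ p, star (U₀ p i) * U₀ p j = if i = j then (1 : ℂ) else 0 := by
    intro i j _ _
    have h := congrFun (congrFun hU₀l i) j
    simpa [Matrix.mul_apply, Matrix.star_apply, Matrix.one_apply] using h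
  refine ⟨U, ?_, hUι⟩
  ext q q'
  rw [Matrix.mul_apply]
  simp only [Matrix.conjTranspose_apply]
  by_cases hq : q ∈ Set.range ι <;> by_cases hq' : q' ∈ Set.range ι
  · obtain ⟨g, rfl⟩ := hq
    obtain ⟨g', rfl⟩ := hq'
    simp only [hUι]
    rw [hWW, Matrix.one_apply]
    exact if_congr hι.eq_iff.symm rfl rfl
  · obtain ⟨g, rfl⟩ := hq
    have hq'r : ¬ q' ∈ Set.range ι := hq'
    have : ∀ p, U p q' = U₀ p (ε ⟨q', hq'r⟩ : {i : N // lam i = 1}) := by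
      intro p; simp only [hUdef, Matrix.of_apply, dif_neg hq'r]
    simp only [hUι, this]
    rw [hWc _ (ε ⟨q', hq'r⟩).2 g, Matrix.one_apply]
    rw [if_neg]
    rintro rfl
    exact hq'r ⟨g, rfl⟩
  · obtain ⟨g', rfl⟩ := hq'
    have hqr : ¬ q ∈ Set.range ι := hq
    have h1 : ∀ p, U p q = U₀ p (ε ⟨q, hqr⟩ : {i : N // lam i = 1}) := by
      intro p; simp only [hUdef, Matrix.of_apply, dif_neg hqr]
    simp only [hUι, h1]
    have : ∑ p, star (U₀ p (ε ⟨q, hqr⟩ : {i : N // lam i = 1})) * W p g'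
        = star (∑ p, star (W p g') * U₀ p (ε ⟨q, hqr⟩ : {i : N // lam i = 1})) := by
      rw [star_sum]
      refine Finset.sum_congr rfl fun p _ => ?_
      rw [star_mul', star_star]
      ring
    rw [this, hWc _ (ε ⟨q, hqr⟩).2 g', star_zero, Matrix.one_apply, if_neg]
    rintro rfl
    exact hqr ⟨g', rfl⟩
  · have hqr : ¬ q ∈ Set.range ι := hq
    have hq'r : ¬ q' ∈ Set.range ι := hq'
    have h1 : ∀ p, U p q = U₀ p (ε ⟨q, hqr⟩ : {i : N // lam i = 1}) := by
      intro p; simp only [hUdef, Matrix.of_apply, dif_neg hqr]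
    have h2 : ∀ p, U p q' = U₀ p (ε ⟨q', hq'r⟩ : {i : N // lam i = 1}) := by
      intro p; simp only [hUdef, Matrix.of_apply, dif_neg hq'r]
    simp only [h1, h2]
    rw [hCC _ _ (ε ⟨q, hqr⟩).2 (ε ⟨q', hq'r⟩).2, Matrix.one_apply]
    refine if_congr ?_ rfl rfl
    constructor
    · intro h
      have := ε.injective (Subtype.ext h)
      exact congrArg Subtype.val this
    · rintro rfl; rfl

open scoped MatrixOrder in
def psqrt {Γ : Type*} [Fintype Γ] [DecidableEq Γ] (A : Matrix Γ Γ ℂ) : Matrix Γ Γ ℂ :=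
  CFC.sqrt A

open scoped MatrixOrder in
lemma psqrt_herm {Γ : Type*} [Fintype Γ] [DecidableEq Γ] {A : Matrix Γ Γ ℂ}
    (h : A.PosSemidef) : (psqrt A)ᴴ = psqrt A :=
  (CFC.sqrt_nonneg A).isSelfAdjoint

open scoped MatrixOrder in
lemma psqrt_mul_self {Γ : Type*} [Fintype Γ] [DecidableEq Γ] {A : Matrix Γ Γ ℂ}
    (h : A.PosSemidef) : psqrt A * psqrt A = A :=
  CFC.sqrt_mul_sqrt_self A h.nonneg

/-- **Naimark's theorem**: every POVM is realized by a projective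
measurement on an enlarged space through an isometry; in particular, for the embedding
`V = 1_Γ ⊗ |0⟩_E`, the POVM elements are recovered as `Mₓ = (1 ⊗ ⟨0|) Πₓ (1 ⊗ |0⟩)`. -/
theorem naimark {Γ X : Type*} [Fintype Γ] [DecidableEq Γ] [Fintype X] [DecidableEq X]
    (M : X → Matrix Γ Γ ℂ) (hpos : ∀ x, (M x).PosSemidef) (hsum : ∑ x, M x = 1) :
    (∃ (d : ℕ) (V : Matrix (Fin d) Γ ℂ) (P : X → Matrix (Fin d) (Fin d) ℂ),
      Vᴴ * V = 1 ∧ (∀ x, (P x)ᴴ = P x ∧ P x * P x = P x) ∧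
      (∀ x y, x ≠ y → P x * P y = 0) ∧ (∑ x, P x = 1) ∧
      (∀ x (ρ : Matrix Γ Γ ℂ), IsDensityMatrix ρ →
        (M x * ρ).trace = (P x * (V * ρ * Vᴴ)).trace)) ∧
    (∃ (e : ℕ) (P : X → Matrix (Γ × Fin (e + 1)) (Γ × Fin (e + 1)) ℂ),
      (∀ x, (P x)ᴴ = P x ∧ P x * P x = P x) ∧
      (∀ x y, x ≠ y → P x * P y = 0) ∧ (∑ x, P x = 1) ∧
      (∀ x (ρ : Matrix Γ Γ ℂ), IsDensityMatrix ρ →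
        (M x * ρ).trace = (P x * (embed (Γ := Γ) e * ρ * (embed (Γ := Γ) e)ᴴ)).trace) ∧
      (∀ x, M x = (embed (Γ := Γ) e)ᴴ * P x * embed (Γ := Γ) e)) := by
  classical
  by_cases hGe : IsEmpty Γ
  · constructor
    · refine ⟨0, 0, fun _ => 0, ?_, ?_, ?_, ?_, ?_⟩
      · ext i j; exact hGe.elim i
      · intro x; constructor <;> (ext i j; exact i.elim0)
      · intro x y _; ext i j; exact i.elim0
      · ext i j; exact i.elim0
      · intro x ρ _; simp [Matrix.trace]
    · refine ⟨0, fun _ => 0, ?_, ?_, ?_, ?_, ?_⟩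
      · intro x; constructor <;> (ext i j; exact hGe.elim i.1)
      · intro x y _; ext i j; exact hGe.elim i.1
      · ext i j; exact hGe.elim i.1
      · intro x ρ _; simp [Matrix.trace]
      · intro x; ext g g'; exact hGe.elim g
  · haveI hG : Nonempty Γ := not_isEmpty_iff.mp hGe
    haveI hX : Nonempty X := by
      by_contra h
      haveI hXe := not_nonempty_iff.mp h
      obtain ⟨g⟩ := hG
      have h1 := congrFun (congrFun hsum g) g
      simp [Matrix.one_apply] at h1
    have hcard : Fintype.card X = (Fintype.card X - 1) + 1 :=
      (Nat.succ_pred_eq_of_pos Fintype.card_pos).symm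
    set e : ℕ := Fintype.card X - 1 with hedef
    set σ : Fin (e + 1) ≃ X := (Fintype.equivFinOfCardEq hcard).symm with hσdef
    set W : Matrix (Γ × Fin (e + 1)) Γ ℂ :=
      Matrix.of (fun p g => psqrt (M (σ p.2)) p.1 g) with hWdef
    have hsq : ∀ x, (psqrt (M x))ᴴ = psqrt (M x) := fun x => psqrt_herm (hpos x)
    have hsqm : ∀ x, psqrt (M x) * psqrt (M x) = M x := fun x => psqrt_mul_self (hpos x)
    have hcol : ∀ (x : X) (g g' : Γ),
        ∑ a, star (psqrt (M x) a g) * psqrt (M x) a g' = M x g g' := by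
      intro x g g'
      have h1 : ((psqrt (M x))ᴴ * psqrt (M x)) g g' = M x g g' := by
        rw [hsq, hsqm]
      simpa [Matrix.mul_apply, Matrix.conjTranspose_apply] using h1
    have hW : Wᴴ * W = 1 := by
      ext g g'
      rw [Matrix.mul_apply]
      calc ∑ p, Wᴴ g p * W p g'
          = ∑ j : Fin (e + 1), ∑ a : Γ, star (W (a, j) g) * W (a, j) g' := by
            rw [Fintype.sum_prod_type, Finset.sum_comm]
            exact Finset.sum_congr rfl fun j _ => Finset.sum_congr rfl fun a _ => by
              rw [Matrix.conjTranspose_apply]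
        _ = ∑ j : Fin (e + 1), M (σ j) g g' :=
            Finset.sum_congr rfl fun j _ => hcol (σ j) g g'
        _ = ∑ x, M x g g' := Equiv.sum_comp σ (fun x => M x g g')
        _ = (1 : Matrix Γ Γ ℂ) g g' := by
            rw [← Matrix.sum_apply g g' Finset.univ (fun x => M x), hsum]
    set D : X → Matrix (Γ × Fin (e + 1)) (Γ × Fin (e + 1)) ℂ :=
      fun x => Matrix.diagonal (fun p => if σ p.2 = x then 1 else 0) with hDdef
    have hDH : ∀ x, (D x)ᴴ = D x := by
      intro x
      rw [hDdef, Matrix.diagonal_conjTranspose]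
      exact congrArg Matrix.diagonal (funext fun p => by
        simp only [Pi.star_apply]
        split_ifs <;> simp)
    have hDmul : ∀ x y, D x * D y = Matrix.diagonal
        (fun p => (if σ p.2 = x then (1 : ℂ) else 0) * (if σ p.2 = y then 1 else 0)) := by
      intro x y
      rw [hDdef]
      exact Matrix.diagonal_mul_diagonal _ _
    have hDidem : ∀ x, D x * D x = D x := by
      intro x
      rw [hDmul]
      exact congrArg Matrix.diagonal (funext fun p => by split_ifs <;> simp)
    have hDorth : ∀ x y, x ≠ y → D x * D y = 0 := by
      intro x y hxy
      rw [hDmul]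
      have : (fun p : Γ × Fin (e + 1) =>
          (if σ p.2 = x then (1 : ℂ) else 0) * (if σ p.2 = y then 1 else 0)) = fun _ => 0 := by
        funext p
        split_ifs with h1 h2
        · exact absurd (h1.symm.trans h2) hxy
        · simp
        · simp
        · simp
      rw [this, Matrix.diagonal_zero]
    have hDsum : ∑ x, D x = 1 := by
      ext p q
      rw [Matrix.sum_apply]
      by_cases hpq : p = q
      · subst hpq
        simp only [hDdef, Matrix.diagonal_apply_eq, Matrix.one_apply_eq]
        rw [Finset.sum_ite_eq Finset.univ (σ p.2) (fun _ => (1 : ℂ))]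
        simp
      · simp only [hDdef, Matrix.diagonal_apply_ne _ hpq, Matrix.one_apply_ne hpq,
          Finset.sum_const_zero]
    have hMW : ∀ x, Wᴴ * D x * W = M x := by
      intro x
      ext g g'
      rw [Matrix.mul_assoc, Matrix.mul_apply]
      calc ∑ p, Wᴴ g p * (D x * W) p g'
          = ∑ p : Γ × Fin (e + 1),
              (if σ p.2 = x then (1 : ℂ) else 0) * (star (W p g) * W p g') := by
            refine Finset.sum_congr rfl fun p _ => ?_
            rw [hDdef, Matrix.diagonal_mul, Matrix.conjTranspose_apply]
            ring
        _ = ∑ j : Fin (e + 1), (if σ j = x then (1 : ℂ) else 0) *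
              (∑ a, star (W (a, j) g) * W (a, j) g') := by
            rw [Fintype.sum_prod_type, Finset.sum_comm]
            exact Finset.sum_congr rfl fun j _ => by rw [Finset.mul_sum]
        _ = ∑ j : Fin (e + 1), (if j = σ.symm x then (M x g g') else 0) := by
            refine Finset.sum_congr rfl fun j _ => ?_
            by_cases h : σ j = x
            · rw [if_pos h, if_pos (by rw [← h, Equiv.symm_apply_apply]), one_mul]
              have : ∑ a, star (W (a, j) g) * W (a, j) g' = M (σ j) g g' := by
                simpa [hWdef] using hcol (σ j) g g'
              rw [this, h]
            · rw [if_neg h, if_neg (fun hc => h (by rw [hc, Equiv.apply_symm_apply])), zero_mul]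
        _ = M x g g' := by
            rw [Finset.sum_ite_eq' Finset.univ (σ.symm x) (fun _ => M x g g')]
            simp
    -- Part 2 : projective dilation through the embedding
    have hinj : Function.Injective (fun g : Γ => ((g, 0) : Γ × Fin (e + 1))) :=
      fun a b h => congrArg Prod.fst h
    obtain ⟨U, hUU, hUext⟩ := exists_unitary_extension _ hinj W hW
    have hUU' : U * Uᴴ = 1 := mul_eq_one_comm.mp hUU
    have hUemb : U * (embed (Γ := Γ) e) = W := by
      ext p g
      rw [Matrix.mul_apply]
      have hemb : ∀ q : Γ × Fin (e + 1), (embed (Γ := Γ) e) q g = if q = (g, 0) then 1 else 0 := by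
        intro q
        simp only [QI.embed, Matrix.of_apply]
        refine if_congr ?_ rfl rfl
        constructor
        · rintro ⟨h1, h2⟩; exact Prod.ext h1 h2
        · rintro rfl; exact ⟨rfl, rfl⟩
      simp_rw [hemb, mul_ite, mul_one, mul_zero]
      rw [Finset.sum_ite_eq' Finset.univ ((g, 0) : Γ × Fin (e + 1)) (fun q => U p q)]
      simpa using hUext p g
    have hPH : ∀ x, (Uᴴ * D x * U)ᴴ = Uᴴ * D x * U := by
      intro x
      rw [Matrix.conjTranspose_mul, Matrix.conjTranspose_mul, Matrix.conjTranspose_conjTranspose,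
        hDH, Matrix.mul_assoc]
    have hPP : ∀ x y, (Uᴴ * D x * U) * (Uᴴ * D y * U) = Uᴴ * (D x * D y) * U := by
      intro x y
      calc (Uᴴ * D x * U) * (Uᴴ * D y * U)
          = Uᴴ * (D x * (U * Uᴴ) * D y) * U := by noncomm_ring
        _ = Uᴴ * (D x * D y) * U := by rw [hUU', mul_one]
    have hPsum : ∑ x, Uᴴ * D x * U = 1 := by
      rw [← Finset.sum_mul, ← Finset.mul_sum, hDsum, mul_one, hUU]
    have hMP : ∀ x, M x = ((embed (Γ := Γ) e))ᴴ * (Uᴴ * D x * U) * (embed (Γ := Γ) e) := by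
      intro x
      have h2 : Wᴴ * D x * W = ((embed (Γ := Γ) e))ᴴ * (Uᴴ * D x * U) * (embed (Γ := Γ) e) := by
        conv_lhs => rw [← hUemb]
        rw [Matrix.conjTranspose_mul]
        simp only [Matrix.mul_assoc]
      rw [← h2, hMW]
    have htr2 : ∀ x (ρ : Matrix Γ Γ ℂ),
        (M x * ρ).trace = ((Uᴴ * D x * U) * ((embed (Γ := Γ) e) * ρ * ((embed (Γ := Γ) e))ᴴ)).trace := by
      intro x ρ
      rw [hMP x]
      have h1 : (((embed (Γ := Γ) e))ᴴ * (Uᴴ * D x * U) * (embed (Γ := Γ) e)) * ρ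
          = ((embed (Γ := Γ) e))ᴴ * ((Uᴴ * D x * U) * ((embed (Γ := Γ) e) * ρ)) := by
        simp only [Matrix.mul_assoc]
      rw [h1, Matrix.trace_mul_comm]
      simp only [Matrix.mul_assoc]
    constructor
    · -- Part 1
      set d : ℕ := Fintype.card (Γ × Fin (e + 1)) with hddef
      set κ : (Γ × Fin (e + 1)) ≃ Fin d := Fintype.equivFin _ with hκdef
      refine ⟨d, W.submatrix ⇑κ.symm id, fun x => (D x).submatrix ⇑κ.symm ⇑κ.symm,
        ?_, ?_, ?_, ?_, ?_⟩
      · rw [Matrix.conjTranspose_submatrix, Matrix.submatrix_mul_equiv Wᴴ W id κ.symm id, hW,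
          Matrix.submatrix_id_id]
      · intro x
        constructor
        · rw [Matrix.conjTranspose_submatrix, hDH]
        · rw [Matrix.submatrix_mul_equiv (D x) (D x) _ κ.symm _, hDidem]
      · intro x y hxy
        rw [Matrix.submatrix_mul_equiv (D x) (D y) _ κ.symm _, hDorth x y hxy,
          Matrix.submatrix_zero]
        rfl
      · have : ∑ x, (D x).submatrix ⇑κ.symm ⇑κ.symm = (∑ x, D x).submatrix ⇑κ.symm ⇑κ.symm := by
          ext i j
          simp [Matrix.sum_apply, Matrix.submatrix_apply]
        rw [this, hDsum]
        exact Matrix.submatrix_one_equiv κ.symm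
      · intro x ρ _
        have hVρ : (W.submatrix ⇑κ.symm id) * ρ * (W.submatrix ⇑κ.symm id)ᴴ
            = (W * ρ * Wᴴ).submatrix ⇑κ.symm ⇑κ.symm := by
          ext i j
          simp [Matrix.mul_apply, Matrix.conjTranspose_apply, Matrix.submatrix_apply,
            Finset.sum_mul, Finset.mul_sum]
        rw [hVρ, Matrix.submatrix_mul_equiv (D x) (W * ρ * Wᴴ) _ κ.symm _]
        have htrsub : ((D x * (W * ρ * Wᴴ)).submatrix ⇑κ.symm ⇑κ.symm).trace
            = (D x * (W * ρ * Wᴴ)).trace := by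
          rw [Matrix.trace, Matrix.trace]
          simp only [Matrix.diag, Matrix.submatrix_apply]
          exact Equiv.sum_comp κ.symm (fun p => (D x * (W * ρ * Wᴴ)) p p)
        rw [htrsub, ← hMW x]
        have h1 : (Wᴴ * D x * W) * ρ = Wᴴ * (D x * (W * ρ)) := by
          simp only [Matrix.mul_assoc]
        rw [h1, Matrix.trace_mul_comm]
        simp only [Matrix.mul_assoc]
    · -- Part 2
      refine ⟨e, fun x => Uᴴ * D x * U, fun x => ⟨hPH x, by rw [hPP, hDidem]⟩,
        fun x y hxy => by rw [hPP, hDorth x y hxy, mul_zero, zero_mul],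
        hPsum, fun x ρ _ => htr2 x ρ, hMP⟩


end QI
end
end
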